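/- Fix μ0, μ1 > 0 and real numbers d0, d1, and define G(ω) := (ω² − μ0·μ1·(ω² − d0)·(ω² − d1))·sin ω + (μ0·(ω² − d0) + μ1·(ω² − d1))·ω·cos ω. For every ω > 0, the boundary value problem X''(x) = −ω²·X(x) on [0,1], X'(0) = μ0·(−ω² + d0)·X(0), X'(1) = −μ1·(−ω² + d1)·X(1) admits a solution X ∈ C²([0,1],ℝ) that is not identically zero if and only if G(ω) = 0. -/

import Mathlib

open Real Set

/-- Derivative of the trig combination. -/
lemma trig_hasDerivAt (A B ω x : ℝ) :
    HasDerivAt (fun x => A * Real.cos (ω*x) + B * Real.sin (ω*x))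
      (ω * (-A * Real.sin (ω*x) + B * Real.cos (ω*x))) x := by
  have hlin : HasDerivAt (fun x : ℝ => ω * x) ω x := by
    simpa using (hasDerivAt_id x).const_mul ω
  have hc : HasDerivAt (fun x => Real.cos (ω*x)) (-Real.sin (ω*x) * ω) x :=
    (Real.hasDerivAt_cos (ω*x)).comp x hlin
  have hs : HasDerivAt (fun x => Real.sin (ω*x)) (Real.cos (ω*x) * ω) x :=
    (Real.hasDerivAt_sin (ω*x)).comp x hlin
  have := (hc.const_mul A).fun_add (hs.const_mul B)
  refine this.congr_deriv ?_
  ring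

lemma trig_deriv_hasDerivAt (A B ω x : ℝ) :
    HasDerivAt (fun x => ω * (-A * Real.sin (ω*x) + B * Real.cos (ω*x)))
      (-ω^2 * (A * Real.cos (ω*x) + B * Real.sin (ω*x))) x := by
  have heq : (fun x => ω * (-A * Real.sin (ω*x) + B * Real.cos (ω*x)))
      = fun x => (ω*B) * Real.cos (ω*x) + (-(ω*A)) * Real.sin (ω*x) := by
    funext y; ring
  rw [heq]
  have := trig_hasDerivAt (ω*B) (-(ω*A)) ω x
  convert this using 1
  ring

/-- For ω > 0, the BVP X'' = -ω²X on [0,1] with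
X'(0) = μ0(-ω²+d0)X(0), X'(1) = -μ1(-ω²+d1)X(1) has a nontrivial C² solution
iff G(ω) = 0. -/
theorem negative_eigenvalue_characteristic_equation
    (μ0 μ1 d0 d1 : ℝ) (hμ0 : 0 < μ0) (hμ1 : 0 < μ1) (ω : ℝ) (hω : 0 < ω) :
    (∃ X : ℝ → ℝ, ContDiff ℝ 2 X ∧
        (∀ x ∈ Icc (0:ℝ) 1, deriv (deriv X) x = -ω^2 * X x) ∧
        deriv X 0 = μ0 * (-ω^2 + d0) * X 0 ∧
        deriv X 1 = -μ1 * (-ω^2 + d1) * X 1 ∧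
        (∃ x ∈ Icc (0:ℝ) 1, X x ≠ 0)) ↔
      (ω^2 - μ0*μ1*(ω^2 - d0)*(ω^2 - d1)) * Real.sin ω
        + (μ0*(ω^2 - d0) + μ1*(ω^2 - d1)) * ω * Real.cos ω = 0 := by
  have hω0 : ω ≠ 0 := ne_of_gt hω
  constructor
  · rintro ⟨X, hC2, hode, hb0, hb1, x0, hx0, hXx0⟩
    have hXd : Differentiable ℝ X := hC2.differentiable (by norm_num)
    have hX'd : Differentiable ℝ (deriv X) := by
      have h' : ContDiff ℝ ((1:ℕ∞)+1) X := by exact_mod_cast hC2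
      exact (contDiff_succ_iff_deriv.mp h').2.2.differentiable (by norm_num)
    set A : ℝ := X 0 with hA
    set B : ℝ := deriv X 0 / ω with hB
    have hωB : ω * B = deriv X 0 := by rw [hB]; field_simp
    set f : ℝ → ℝ := fun x => A * Real.cos (ω*x) + B * Real.sin (ω*x) with hf
    set f' : ℝ → ℝ := fun x => ω * (-A * Real.sin (ω*x) + B * Real.cos (ω*x)) with hf'
    set g : ℝ → ℝ := fun x => deriv X x - f' x with hg
    set h : ℝ → ℝ := fun x => X x - f x with hh
    have hhd : ∀ x, HasDerivAt h (g x) x := fun x =>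
      ((hXd x).hasDerivAt).sub (trig_hasDerivAt A B ω x)
    have hgd : ∀ x, HasDerivAt g (deriv (deriv X) x + ω^2 * f x) x := by
      intro x
      have := ((hX'd x).hasDerivAt).fun_sub (trig_deriv_hasDerivAt A B ω x)
      refine this.congr_deriv ?_
      ring
    set E : ℝ → ℝ := fun x => (g x)^2 + ω^2 * (h x)^2 with hE
    have hEd : ∀ x ∈ Icc (0:ℝ) 1, HasDerivAt E 0 x := by
      intro x hx
      have h1 : HasDerivAt (fun y => (g y)^2) (2 * g x * (deriv (deriv X) x + ω^2 * f x)) x := by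
        simpa [mul_comm, mul_assoc] using ((hgd x).fun_pow 2)
      have h2 : HasDerivAt (fun y => ω^2 * (h y)^2) (ω^2 * (2 * h x * g x)) x := by
        have := ((hhd x).pow 2).const_mul (ω^2)
        simpa [mul_comm, mul_assoc] using this
      have := h1.fun_add h2
      have hx2 : deriv (deriv X) x = -ω^2 * X x := hode x hx
      refine this.congr_deriv ?_
      rw [hx2]
      simp only [hh, hg]
      ring
    have hgc : Continuous g := continuous_iff_continuousAt.mpr fun x => (hgd x).continuousAt
    have hhc : Continuous h := continuous_iff_continuousAt.mpr fun x => (hhd x).continuousAt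
    have hEcont : ContinuousOn E (Icc (0:ℝ) 1) :=
      ((hgc.pow 2).add (continuous_const.mul (hhc.pow 2))).continuousOn
    have hconst : ∀ x ∈ Icc (0:ℝ) 1, E x = E 0 :=
      constant_of_has_deriv_right_zero hEcont
        (fun x hx => ((hEd x (Ico_subset_Icc_self hx)).hasDerivWithinAt))
    have hE0 : E 0 = 0 := by
      have hA0 : h 0 = 0 := by simp [hh, hf, hA]
      have hB0 : g 0 = 0 := by
        simp only [hg, hf']
        rw [← hωB]
        norm_num
      simp [hE, hA0, hB0]
    have hzero : ∀ x ∈ Icc (0:ℝ) 1, h x = 0 ∧ g x = 0 := by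
      intro x hx
      have := hconst x hx
      rw [hE0] at this
      have hg2 : (g x)^2 + ω^2 * (h x)^2 = 0 := this
      have hω2 : (0:ℝ) < ω^2 := pow_pos hω 2
      have hh2 : (h x)^2 = 0 := by nlinarith [sq_nonneg (g x), sq_nonneg (h x)]
      have hg20 : (g x)^2 = 0 := by nlinarith [sq_nonneg (g x), sq_nonneg (h x)]
      exact ⟨pow_eq_zero_iff (two_ne_zero) |>.mp hh2, pow_eq_zero_iff (two_ne_zero) |>.mp hg20⟩
    have hX1 : X 1 = A * Real.cos ω + B * Real.sin ω := by
      have := (hzero 1 (by norm_num)).1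
      simp only [hh, hf, sub_eq_zero] at this
      simpa using this
    have hX'1 : deriv X 1 = ω * (-A * Real.sin ω + B * Real.cos ω) := by
      have := (hzero 1 (by norm_num)).2
      simp only [hg, hf', sub_eq_zero] at this
      simpa using this
    have h1 : ω * B = μ0 * (-ω^2 + d0) * A := by rw [hωB, hb0]
    have h2 : ω * (-A * Real.sin ω + B * Real.cos ω)
        = -μ1 * (-ω^2 + d1) * (A * Real.cos ω + B * Real.sin ω) := by
      rw [← hX'1, ← hX1, hb1]
    have hAne : A ≠ 0 := by
      intro hA0
      have hB0 : B = 0 := by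
        have : ω * B = 0 := by rw [h1, hA0]; ring
        exact (mul_eq_zero.mp this).resolve_left hω0
      have : X x0 = 0 := by
        have := (hzero x0 hx0).1
        simp only [hh, hf, sub_eq_zero] at this
        rw [this, hA0, hB0]; ring
      exact hXx0 this
    have key : A * ((ω^2 - μ0*μ1*(ω^2 - d0)*(ω^2 - d1)) * Real.sin ω
        + (μ0*(ω^2 - d0) + μ1*(ω^2 - d1)) * ω * Real.cos ω) = 0 := by
      linear_combination (ω * Real.cos ω - μ1*(ω^2 - d1) * Real.sin ω) * h1 - ω * h2
    exact (mul_eq_zero.mp key).resolve_left hAne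
  · intro hG
    refine ⟨fun x => ω * Real.cos (ω*x) + (-μ0*(ω^2-d0)) * Real.sin (ω*x), ?_, ?_, ?_, ?_, ?_⟩
    · apply ContDiff.add
      · exact (contDiff_const.mul ((Real.contDiff_cos).comp (contDiff_const.mul contDiff_id)))
      · exact (contDiff_const.mul ((Real.contDiff_sin).comp (contDiff_const.mul contDiff_id)))
    · intro x _
      have hd1 : deriv (fun x => ω * Real.cos (ω*x) + (-μ0*(ω^2-d0)) * Real.sin (ω*x))
          = fun x => ω * (-ω * Real.sin (ω*x) + (-μ0*(ω^2-d0)) * Real.cos (ω*x)) := by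
        funext y; exact (trig_hasDerivAt ω (-μ0*(ω^2-d0)) ω y).deriv
      rw [hd1]
      exact (trig_deriv_hasDerivAt ω (-μ0*(ω^2-d0)) ω x).deriv
    · rw [(trig_hasDerivAt ω (-μ0*(ω^2-d0)) ω 0).deriv]
      simp only [mul_zero, Real.sin_zero, Real.cos_zero]
      ring
    · rw [(trig_hasDerivAt ω (-μ0*(ω^2-d0)) ω 1).deriv]
      simp only [mul_one]
      linear_combination -hG
    · refine ⟨0, by norm_num, ?_⟩
      simp only [mul_zero, Real.cos_zero, Real.sin_zero]
      intro hcon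
      exact hω0 (by linarith)
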